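/- arXiv:2311.02960 — 6 statements merged into one kernel-verified Lean document; each statement's English description precedes it below -/
import Mathlib

section
/- If Q has orthonormal columns, A is a symmetric invertible K×K matrix, and QAQᵀ has compact eigenvalue decomposition UΛUᵀ with U having orthonormal columns and Λ diagonal invertible, then QQᵀ = UUᵀ. -/
open scoped BigOperators
open Matrix

/-- If `Q ∈ ℝ^{d×K}` has orthonormal columns, `A ∈ ℝ^{K×K}` is symmetric and
invertible, and `QAQᵀ = UΛUᵀ` with `U` having orthonormal columns and `Λ`
diagonal and invertible, then `QQᵀ = UUᵀ`. -/
theorem QQt_eq_UUt {d K : ℕ} (hdK : K < d)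
    (Q U : Matrix (Fin d) (Fin K) ℝ) (A Λ : Matrix (Fin K) (Fin K) ℝ)
    (hQ : Qᵀ * Q = 1) (hU : Uᵀ * U = 1)
    (hAsymm : Aᵀ = A) (hAunit : IsUnit A)
    (hΛdiag : Λ.IsDiag) (hΛunit : IsUnit Λ)
    (hdecomp : U * Λ * Uᵀ = Q * A * Qᵀ) :
    Q * Qᵀ = U * Uᵀ := by
  obtain ⟨iA⟩ := hAunit.nonempty_invertible
  obtain ⟨iΛ⟩ := hΛunit.nonempty_invertible
  -- QQᵀ U = U
  have h1 : Q * Qᵀ * (U * Λ * Uᵀ) = U * Λ * Uᵀ := by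
    rw [hdecomp]
    calc Q * Qᵀ * (Q * A * Qᵀ) = Q * (Qᵀ * Q) * A * Qᵀ := by
          simp [Matrix.mul_assoc]
      _ = Q * A * Qᵀ := by rw [hQ, Matrix.mul_one]
  have h2 : Q * Qᵀ * U = U := by
    have := congrArg (fun M => M * U * ⅟Λ) h1
    simp only [Matrix.mul_assoc] at this
    rw [← Matrix.mul_assoc Uᵀ U (⅟Λ), hU, Matrix.one_mul, mul_invOf_self,
      Matrix.mul_one] at this
    simpa [Matrix.mul_assoc] using this
  -- UUᵀ Q = Q
  have h3 : U * Uᵀ * (Q * A * Qᵀ) = Q * A * Qᵀ := by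
    rw [← hdecomp]
    calc U * Uᵀ * (U * Λ * Uᵀ) = U * (Uᵀ * U) * Λ * Uᵀ := by
          simp [Matrix.mul_assoc]
      _ = U * Λ * Uᵀ := by rw [hU, Matrix.mul_one]
  have h4 : U * Uᵀ * Q = Q := by
    have := congrArg (fun M => M * Q * ⅟A) h3
    simp only [Matrix.mul_assoc] at this
    rw [← Matrix.mul_assoc Qᵀ Q (⅟A), hQ, Matrix.one_mul, mul_invOf_self,
      Matrix.mul_one] at this
    simpa [Matrix.mul_assoc] using this
  -- combine
  have h5 : Q * Qᵀ = U * Uᵀ * (Q * Qᵀ) := by rw [← Matrix.mul_assoc, h4]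
  have h6 : U * Uᵀ = Q * Qᵀ * (U * Uᵀ) := by rw [← Matrix.mul_assoc, h2]
  have h7 : (U * Uᵀ * (Q * Qᵀ))ᵀ = Q * Qᵀ * (U * Uᵀ) := by
    simp [Matrix.transpose_mul, Matrix.mul_assoc]
  calc Q * Qᵀ = (Q * Qᵀ)ᵀ := by simp
    _ = (U * Uᵀ * (Q * Qᵀ))ᵀ := by rw [← h5]
    _ = Q * Qᵀ * (U * Uᵀ) := h7
    _ = U * Uᵀ := by rw [← h6]
end

section
/- If the data matrix is θ-nearly orthonormal with N = nK samples grouped into K classes of size n, and X̄ is the matrix repeating each class mean n times, then the squared Frobenius norm of X − X̄ lies between N − K − 4θ and N − K + 4θ. -/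
open scoped BigOperators
open Matrix

/-- For θ-nearly orthonormal data `X ∈ ℝ^{d×N}` with `N = nK` balanced classes
and `X̄` the matrix repeating each class mean `n` times, the squared Frobenius
norm of `X − X̄` lies between `N − K − 4θ` and `N − K + 4θ`. -/
theorem frobSq_deviation_bounds {d K n : ℕ} (hn : 0 < n) (hK : 0 < K)
    (X : Matrix (Fin d) (Fin K × Fin n) ℝ) (θ : ℝ) (hθ0 : 0 ≤ θ) (hθ : θ < 1 / 4)
    (hnorm : ∀ c, |(∑ i, X i c ^ 2) - 1| ≤ θ / (n * K))
    (hinner : ∀ c c', c ≠ c' → |∑ i, X i c * X i c'| ≤ θ / (n * K))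
    (Xbar : Matrix (Fin d) (Fin K × Fin n) ℝ)
    (hXbar : Xbar = Matrix.of fun i c => (∑ j, X i (c.1, j)) / n) :
    (n * K : ℝ) - K - 4 * θ ≤ ∑ i, ∑ c, (X i c - Xbar i c) ^ 2 ∧
    (∑ i, ∑ c, (X i c - Xbar i c) ^ 2) ≤ (n * K : ℝ) - K + 4 * θ := by
  set S := ∑ i, ∑ c, (X i c - Xbar i c) ^ 2 with hS
  subst hXbar
  simp only [Matrix.of_apply] at hS
  have hn' : (0:ℝ) < n := by exact_mod_cast hn
  have hK' : (0:ℝ) < K := by exact_mod_cast hK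
  have hN : (0:ℝ) < (n:ℝ) * K := by positivity
  set ε := θ / ((n:ℝ) * K) with hεdef
  have hε : 0 ≤ ε := by positivity
  set T := ∑ c : Fin K × Fin n, ∑ i, X i c ^ 2 with hT
  set Off := ∑ k : Fin K, ∑ j : Fin n, ∑ j' ∈ Finset.univ.erase j,
      ∑ i, X i (k,j) * X i (k,j') with hOff
  -- Step 1: per-(i,k) identity
  have key : ∀ (i : Fin d) (k : Fin K),
      ∑ a : Fin n, (X i (k,a) - (∑ j, X i (k,j))/(n:ℝ))^2
        = (∑ a, X i (k,a)^2) - (∑ j, X i (k,j))^2 / n := by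
    intro i k
    have hne : (n:ℝ) ≠ 0 := ne_of_gt hn'
    have expand : ∀ a : Fin n, (X i (k,a) - (∑ j, X i (k,j))/(n:ℝ))^2
        = X i (k,a)^2 - 2*((∑ j, X i (k,j))/(n:ℝ))*X i (k,a)
          + ((∑ j, X i (k,j))/(n:ℝ))^2 := by intro a; ring
    rw [Finset.sum_congr rfl (fun a _ => expand a)]
    rw [Finset.sum_add_distrib, Finset.sum_sub_distrib, ← Finset.mul_sum,
      Finset.sum_const, Finset.card_univ, Fintype.card_fin]
    field_simp
    linear_combination (∑ j, X i (k,j))^2 * (by rw [← mul_pow, mul_inv_cancel₀ hne, one_pow] : (n:ℝ)^2 * (n:ℝ)⁻¹^2 = 1)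
  -- Step 2: the global identity
  have hId : S = (1 - 1/(n:ℝ)) * T - Off / n := by
    have h1 : S = ∑ i, ∑ k, ((∑ a, X i (k,a)^2) - (∑ j, X i (k,j))^2 / n) := by
      rw [hS]
      refine Finset.sum_congr rfl (fun i _ => ?_)
      rw [Fintype.sum_prod_type]
      exact Finset.sum_congr rfl (fun k _ => key i k)
    have h2 : ∑ i, ∑ k : Fin K, (∑ a, X i (k,a)^2) = T := by
      rw [hT, Finset.sum_comm, Fintype.sum_prod_type]
      exact Finset.sum_congr rfl (fun k _ => Finset.sum_comm)
    have h3 : ∑ i, ∑ k : Fin K, (∑ j, X i (k,j))^2 = T + Off := by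
      have hsq : ∀ (i : Fin d) (k : Fin K), (∑ j, X i (k,j))^2
          = ∑ j, ∑ j', X i (k,j) * X i (k,j') := by
        intro i k
        rw [sq, Finset.sum_mul_sum]
      calc ∑ i, ∑ k : Fin K, (∑ j, X i (k,j))^2
          = ∑ k : Fin K, ∑ j, ∑ j', ∑ i, X i (k,j) * X i (k,j') := by
            rw [Finset.sum_comm]
            refine Finset.sum_congr rfl (fun k _ => ?_)
            rw [Finset.sum_congr rfl (fun i _ => hsq i k), Finset.sum_comm]
            refine Finset.sum_congr rfl (fun j _ => ?_)
            rw [Finset.sum_comm]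
        _ = ∑ k : Fin K, ∑ j : Fin n, ((∑ i, X i (k,j) * X i (k,j))
              + ∑ j' ∈ Finset.univ.erase j, ∑ i, X i (k,j) * X i (k,j')) := by
            refine Finset.sum_congr rfl (fun k _ => Finset.sum_congr rfl (fun j _ => ?_))
            exact (Finset.add_sum_erase Finset.univ _ (Finset.mem_univ j)).symm
        _ = T + Off := by
            rw [hOff, hT]
            rw [Finset.sum_congr rfl
              (fun k _ => Finset.sum_add_distrib (s := Finset.univ))]
            rw [Finset.sum_add_distrib]
            congr 1
            rw [Fintype.sum_prod_type]
            exact Finset.sum_congr rfl (fun k _ => Finset.sum_congr rfl (fun j _ =>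
              Finset.sum_congr rfl (fun i _ => (pow_two _).symm)))
    rw [h1]
    rw [Finset.sum_congr rfl (fun i _ => Finset.sum_sub_distrib (s := Finset.univ) _ _)]
    rw [Finset.sum_sub_distrib, h2]
    have h4 : ∑ i, ∑ k : Fin K, (∑ j, X i (k,j))^2 / (n:ℝ)
        = (T + Off) / n := by
      rw [← h3, Finset.sum_div]
      exact Finset.sum_congr rfl (fun i _ => (Finset.sum_div _ _ _).symm)
    rw [h4]
    field_simp
    ring
  -- Step 3: bound on T
  have hTb : |T - (n:ℝ)*K| ≤ θ := by
    have heq : T - (n:ℝ)*K = ∑ c : Fin K × Fin n, ((∑ i, X i c ^ 2) - 1) := by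
      rw [Finset.sum_sub_distrib, Finset.sum_const, Finset.card_univ]
      simp [Fintype.card_prod, mul_comm]
      exact hT
    rw [heq]
    calc |∑ c : Fin K × Fin n, ((∑ i, X i c ^ 2) - 1)|
        ≤ ∑ c : Fin K × Fin n, |(∑ i, X i c ^ 2) - 1| :=
          Finset.abs_sum_le_sum_abs _ _
      _ ≤ ∑ _c : Fin K × Fin n, ε := Finset.sum_le_sum (fun c _ => hnorm c)
      _ = ((n:ℝ)*K) * ε := by
          rw [Finset.sum_const, Finset.card_univ, nsmul_eq_mul, Fintype.card_prod,
            Fintype.card_fin, Fintype.card_fin]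
          push_cast
          ring
      _ = θ := by
          rw [hεdef]
          field_simp
  -- Step 4: bound on Off
  have hOffb : |Off| ≤ (n:ℝ) * θ := by
    have step : ∀ (k : Fin K) (j : Fin n),
        |∑ j' ∈ Finset.univ.erase j, ∑ i, X i (k,j) * X i (k,j')| ≤ (n:ℝ) * ε := by
      intro k j
      calc |∑ j' ∈ Finset.univ.erase j, ∑ i, X i (k,j) * X i (k,j')|
          ≤ ∑ j' ∈ Finset.univ.erase j, |∑ i, X i (k,j) * X i (k,j')| :=
            Finset.abs_sum_le_sum_abs _ _
        _ ≤ ∑ _j' ∈ Finset.univ.erase j, ε := by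
            refine Finset.sum_le_sum (fun j' hj' => ?_)
            have hne : (k,j) ≠ (k,j') := by
              intro h
              have hjj : j = j' := congrArg Prod.snd h
              exact (Finset.mem_erase.mp hj').1 hjj.symm
            exact hinner _ _ hne
        _ = ((Finset.univ.erase j).card : ℝ) * ε := by rw [Finset.sum_const, nsmul_eq_mul]
        _ ≤ (n:ℝ) * ε := by
            apply mul_le_mul_of_nonneg_right _ hε
            have : (Finset.univ.erase j).card ≤ n := by
              calc (Finset.univ.erase j).card ≤ (Finset.univ : Finset (Fin n)).card :=
                Finset.card_le_card (Finset.erase_subset _ _)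
              _ = n := by simp
            exact_mod_cast this
    calc |Off| ≤ ∑ k : Fin K, |∑ j : Fin n, ∑ j' ∈ Finset.univ.erase j,
            ∑ i, X i (k,j) * X i (k,j')| := Finset.abs_sum_le_sum_abs _ _
      _ ≤ ∑ k : Fin K, ∑ j : Fin n, |∑ j' ∈ Finset.univ.erase j,
            ∑ i, X i (k,j) * X i (k,j')| :=
          Finset.sum_le_sum (fun k _ => Finset.abs_sum_le_sum_abs _ _)
      _ ≤ ∑ _k : Fin K, ∑ _j : Fin n, (n:ℝ) * ε :=
          Finset.sum_le_sum (fun k _ => Finset.sum_le_sum (fun j _ => step k j))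
      _ = (K:ℝ) * ((n:ℝ) * ((n:ℝ) * ε)) := by
          simp [Finset.sum_const, Finset.card_univ, nsmul_eq_mul]
          try ring
      _ ≤ (n:ℝ) * θ := by
          rw [hεdef]
          rw [div_eq_mul_inv]
          rw [show (K:ℝ) * ((n:ℝ) * ((n:ℝ) * (θ * ((n:ℝ)*(K:ℝ))⁻¹)))
            = (n:ℝ) * θ * (((n:ℝ)*(K:ℝ)) * ((n:ℝ)*(K:ℝ))⁻¹) by ring]
          rw [mul_inv_cancel₀ (ne_of_gt hN), mul_one]
  -- Step 5: conclude
  have hfrac0 : 0 ≤ 1 - 1/(n:ℝ) := by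
    have : 1/(n:ℝ) ≤ 1 := by
      rw [div_le_one hn']
      exact_mod_cast hn
    linarith
  have hfrac1 : 1 - 1/(n:ℝ) ≤ 1 := by
    have : 0 < 1/(n:ℝ) := by positivity
    linarith
  have hmain : |S - ((n:ℝ)*K - K)| ≤ 2 * θ := by
    have heq : S - ((n:ℝ)*K - K) = (1 - 1/(n:ℝ)) * (T - (n:ℝ)*K) - Off / n := by
      rw [hId]; field_simp; ring
    rw [heq]
    calc |(1 - 1/(n:ℝ)) * (T - (n:ℝ)*K) - Off / n|
        ≤ |(1 - 1/(n:ℝ)) * (T - (n:ℝ)*K)| + |Off / n| := abs_sub _ _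
      _ ≤ 1 * θ + θ := by
          gcongr ?_ + ?_
          · rw [abs_mul, abs_of_nonneg hfrac0]
            exact mul_le_mul hfrac1 hTb (abs_nonneg _) (by norm_num)
          · rw [abs_div, abs_of_pos hn', div_le_iff₀ hn']
            calc |Off| ≤ (n:ℝ) * θ := hOffb
              _ = θ * n := by ring
      _ = 2 * θ := by ring
  have habs := abs_le.mp hmain
  constructor
  · linarith [habs.1]
  · linarith [habs.2]
end

section
/- Under the θ-near-orthonormality assumption with balanced classes, the operator norm of X − X̄ (X̄ the class-mean-repeated matrix) is at most √(1+4θ). -/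
open scoped BigOperators
open Matrix

/-- Euclidean norm of a real vector. -/
noncomputable def euclNorm {n : Type*} [Fintype n] (v : n → ℝ) : ℝ :=
  Real.sqrt (∑ i, v i ^ 2)

/-- For θ-nearly orthonormal balanced data, the operator norm of `X − X̄`
(where `X̄` repeats each class mean) is at most `√(1+4θ)`:
`‖(X − X̄)v‖ ≤ √(1+4θ)·‖v‖` for every `v`. -/
theorem opNorm_deviation_bound {d K n : ℕ} (hn : 0 < n) (hK : 0 < K)
    (X : Matrix (Fin d) (Fin K × Fin n) ℝ) (θ : ℝ) (hθ0 : 0 ≤ θ) (hθ : θ < 1 / 4)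
    (hnorm : ∀ c, |(∑ i, X i c ^ 2) - 1| ≤ θ / (n * K))
    (hinner : ∀ c c', c ≠ c' → |∑ i, X i c * X i c'| ≤ θ / (n * K))
    (Xbar : Matrix (Fin d) (Fin K × Fin n) ℝ)
    (hXbar : Xbar = Matrix.of fun i c => (∑ j, X i (c.1, j)) / n) :
    ∀ v : Fin K × Fin n → ℝ,
      euclNorm ((X - Xbar).mulVec v) ≤ Real.sqrt (1 + 4 * θ) * euclNorm v := by
  subst hXbar
  intro v
  have hn' : (0:ℝ) < n := by exact_mod_cast hn
  have hK' : (0:ℝ) < K := by exact_mod_cast hK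
  have hN1 : (1:ℝ) ≤ (n:ℝ) * K := by
    have : (1:ℕ) ≤ n * K := Nat.one_le_iff_ne_zero.mpr (Nat.mul_ne_zero hn.ne' hK.ne')
    exact_mod_cast this
  have hNpos : (0:ℝ) < (n:ℝ) * K := lt_of_lt_of_le one_pos hN1
  set D : ℝ := θ / ((n:ℝ) * K) with hD
  have hD0 : 0 ≤ D := div_nonneg hθ0 hNpos.le
  have hDθ : D ≤ θ := by
    rw [hD, div_le_iff₀ hNpos]
    nlinarith
  set w : Fin K × Fin n → ℝ := fun c : Fin K × Fin n => v c - (∑ j, v (c.1, j)) / n with hw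
  -- Step 1: (X − X̄) v = X w
  have hMv : (X - Matrix.of fun (i : Fin d) (c : Fin K × Fin n) => (∑ j, X i (c.1, j)) / n).mulVec v = X.mulVec w := by
    funext i
    simp only [Matrix.mulVec, dotProduct, Matrix.sub_apply, Matrix.of_apply]
    have h1 : ∑ c : Fin K × Fin n, ((∑ j, X i (c.1, j)) / n) * v c
        = ∑ k : Fin K, ((∑ j, X i (k, j)) * (∑ j, v (k, j))) / (n:ℝ) := by
      rw [Fintype.sum_prod_type]
      refine Finset.sum_congr rfl fun k _ => ?_
      show ∑ y : Fin n, ((∑ j, X i (k, j)) / (n:ℝ)) * v (k, y) = _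
      rw [← Finset.mul_sum]
      ring
    have h2 : ∑ c : Fin K × Fin n, X i c * ((∑ j, v (c.1, j)) / n)
        = ∑ k : Fin K, ((∑ j, X i (k, j)) * (∑ j, v (k, j))) / (n:ℝ) := by
      rw [Fintype.sum_prod_type]
      refine Finset.sum_congr rfl fun k _ => ?_
      show ∑ y : Fin n, X i (k, y) * ((∑ j, v (k, j)) / (n:ℝ)) = _
      rw [← Finset.sum_mul]
      ring
    calc ∑ c, (X i c - (∑ j, X i (c.1, j)) / n) * v c
        = ∑ c, X i c * v c - ∑ c : Fin K × Fin n, ((∑ j, X i (c.1, j)) / n) * v c := by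
          rw [← Finset.sum_sub_distrib]
          exact Finset.sum_congr rfl fun c _ => by ring
      _ = ∑ c, X i c * v c - ∑ c : Fin K × Fin n, X i c * ((∑ j, v (c.1, j)) / n) := by
          rw [h1, h2]
      _ = ∑ c, X i c * w c := by
          rw [← Finset.sum_sub_distrib]
          exact Finset.sum_congr rfl fun c _ => by simp [hw]; ring
  -- Step 2: ∑ w² ≤ ∑ v²
  have hwv : ∑ c, w c ^ 2 ≤ ∑ c, v c ^ 2 := by
    rw [Fintype.sum_prod_type, Fintype.sum_prod_type]
    refine Finset.sum_le_sum fun k _ => ?_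
    have hexp : ∑ j, w (k, j) ^ 2
        = (∑ j, v (k, j) ^ 2) - (∑ j, v (k, j)) ^ 2 / n := by
      have : ∀ j : Fin n, w (k, j) ^ 2
          = v (k, j) ^ 2 - (2 * ((∑ j, v (k, j)) / n)) * v (k, j)
            + ((∑ j, v (k, j)) / n) ^ 2 := fun j => by simp [hw]; ring
      rw [Finset.sum_congr rfl fun j _ => this j]
      rw [Finset.sum_add_distrib, Finset.sum_sub_distrib, ← Finset.mul_sum,
        Finset.sum_const, Finset.card_univ, Fintype.card_fin, nsmul_eq_mul]
      field_simp
      ring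
    rw [hexp]
    have : 0 ≤ (∑ j, v (k, j)) ^ 2 / n := div_nonneg (sq_nonneg _) hn'.le
    linarith
  -- Step 3: Gram expansion
  set G : Fin K × Fin n → Fin K × Fin n → ℝ := fun c c' => ∑ i, X i c * X i c' with hG
  have hexp : ∑ i, (X.mulVec w i) ^ 2
      = ∑ c, ∑ c', (w c * w c') * G c c' := by
    simp only [Matrix.mulVec, dotProduct]
    have h1 : ∀ i : Fin d, (∑ c, X i c * w c) ^ 2
        = ∑ c, ∑ c', (w c * w c') * (X i c * X i c') := by
      intro i
      rw [sq, Finset.sum_mul_sum]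
      exact Finset.sum_congr rfl fun c _ => Finset.sum_congr rfl fun c' _ => by ring
    rw [Finset.sum_congr rfl fun i _ => h1 i, Finset.sum_comm]
    refine Finset.sum_congr rfl fun c _ => ?_
    rw [Finset.sum_comm]
    exact Finset.sum_congr rfl fun c' _ => by rw [← Finset.mul_sum]
  -- Step 4: bound the Gram sum
  have hGd : ∀ c, G c c ≤ 1 + D := fun c => by
    have := abs_le.1 (hnorm c)
    simp only [hG]
    have : (∑ i, X i c ^ 2) ≤ 1 + D := by linarith [this.2]
    calc ∑ i, X i c * X i c = ∑ i, X i c ^ 2 :=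
          Finset.sum_congr rfl fun i _ => (sq (X i c)).symm ▸ (sq (X i c)) ▸ by ring
      _ ≤ 1 + D := this
  have hbound : ∑ c, ∑ c', (w c * w c') * G c c'
      ≤ (1 + D) * (∑ c, w c ^ 2) + D * (∑ c, |w c|) ^ 2 := by
    have hper : ∀ c : Fin K × Fin n, ∑ c', (w c * w c') * G c c'
        ≤ (1 + D) * w c ^ 2 + D * (|w c| * ∑ c', |w c'|) := by
      intro c
      have hsplit : ∑ c', (w c * w c') * G c c'
          = (w c * w c) * G c c + ∑ c' ∈ Finset.univ.erase c, (w c * w c') * G c c' :=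
        (Finset.add_sum_erase _ _ (Finset.mem_univ c)).symm
      rw [hsplit]
      have h1 : (w c * w c) * G c c ≤ (1 + D) * w c ^ 2 := by
        have := hGd c
        nlinarith [sq_nonneg (w c)]
      have h2 : ∑ c' ∈ Finset.univ.erase c, (w c * w c') * G c c'
          ≤ ∑ c' ∈ Finset.univ.erase c, D * (|w c| * |w c'|) := by
        refine Finset.sum_le_sum fun c' hc' => ?_
        have hne : c ≠ c' := fun h => (Finset.mem_erase.1 hc').1 h.symm
        have hGo := hinner c c' hne
        calc (w c * w c') * G c c' ≤ |(w c * w c') * G c c'| := le_abs_self _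
          _ = |w c| * |w c'| * |G c c'| := by rw [abs_mul, abs_mul]
          _ ≤ |w c| * |w c'| * D := by
              exact mul_le_mul_of_nonneg_left hGo (by positivity)
          _ = D * (|w c| * |w c'|) := by ring
      have h3 : ∑ c' ∈ Finset.univ.erase c, D * (|w c| * |w c'|)
          ≤ ∑ c', D * (|w c| * |w c'|) := by
        refine Finset.sum_le_sum_of_subset_of_nonneg (Finset.erase_subset _ _)
          fun c' _ _ => by positivity
      have h4 : ∑ c', D * (|w c| * |w c'|) = D * (|w c| * ∑ c', |w c'|) := by
        rw [← Finset.mul_sum, ← Finset.mul_sum]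
      linarith
    calc ∑ c, ∑ c', (w c * w c') * G c c'
        ≤ ∑ c, ((1 + D) * w c ^ 2 + D * (|w c| * ∑ c', |w c'|)) :=
          Finset.sum_le_sum fun c _ => hper c
      _ = (1 + D) * (∑ c, w c ^ 2) + D * (∑ c, |w c|) ^ 2 := by
          rw [Finset.sum_add_distrib, ← Finset.mul_sum, ← Finset.mul_sum, ← Finset.sum_mul, sq]
  -- Cauchy–Schwarz : (∑ |w|)² ≤ N ∑ w²
  have hCS : (∑ c, |w c|) ^ 2 ≤ ((n:ℝ) * K) * ∑ c, w c ^ 2 := by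
    have := sq_sum_le_card_mul_sum_sq (s := (Finset.univ : Finset (Fin K × Fin n)))
      (f := fun c => |w c|)
    simp only [Finset.card_univ, Fintype.card_prod, Fintype.card_fin, sq_abs] at this
    calc (∑ c, |w c|) ^ 2 ≤ ((K * n : ℕ) : ℝ) * ∑ c, w c ^ 2 := by exact_mod_cast this
      _ = ((n:ℝ) * K) * ∑ c, w c ^ 2 := by push_cast; ring
  have hwsq : 0 ≤ ∑ c, w c ^ 2 := Finset.sum_nonneg fun c _ => sq_nonneg _
  have hvsq : 0 ≤ ∑ c, v c ^ 2 := Finset.sum_nonneg fun c _ => sq_nonneg _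
  have hmain : ∑ i, (X.mulVec w i) ^ 2 ≤ (1 + 4 * θ) * ∑ c, v c ^ 2 := by
    have hDN : D * ((n:ℝ) * K) = θ := by
      rw [hD]; field_simp
    have step : ∑ i, (X.mulVec w i) ^ 2 ≤ (1 + D + θ) * ∑ c, w c ^ 2 := by
      rw [hexp]
      calc ∑ c, ∑ c', (w c * w c') * G c c'
          ≤ (1 + D) * (∑ c, w c ^ 2) + D * (∑ c, |w c|) ^ 2 := hbound
        _ ≤ (1 + D) * (∑ c, w c ^ 2) + D * (((n:ℝ) * K) * ∑ c, w c ^ 2) :=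
            by nlinarith
        _ = (1 + D + θ) * ∑ c, w c ^ 2 := by
            rw [← mul_assoc, hDN]; ring
    have h1 : (1 + D + θ) * ∑ c, w c ^ 2 ≤ (1 + 4 * θ) * ∑ c, w c ^ 2 := by
      nlinarith
    have h2 : (1 + 4 * θ) * ∑ c, w c ^ 2 ≤ (1 + 4 * θ) * ∑ c, v c ^ 2 := by
      nlinarith
    linarith
  -- conclude
  rw [hMv]
  unfold euclNorm
  calc Real.sqrt (∑ i, (X.mulVec w i) ^ 2)
      ≤ Real.sqrt ((1 + 4 * θ) * ∑ c, v c ^ 2) := Real.sqrt_le_sqrt hmain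
    _ = Real.sqrt (1 + 4 * θ) * Real.sqrt (∑ c, v c ^ 2) :=
        Real.sqrt_mul (by linarith) _
end

section
/- If W_L and W_{L−1} are δ-balanced in the sense that ‖W_LᵀW_L − W_{L−1}W_{L−1}ᵀ‖_F ≤ δ, then the vector of squared singular values of W_L differs from the corresponding leading squared singular values of W_{L−1} by at most δ in a Frobenius sense: ‖Σ_LᵀΣ_L − Σ_{L−1}²‖_F ≤ δ, where Σ_L, Σ_{L−1} are the diagonal singular value matrices. -/
open scoped BigOperators
open Matrix

/-- Frobenius norm of a real matrix. -/
noncomputable def frobNorm {m n : Type*} [Fintype m] [Fintype n] (A : Matrix m n ℝ) : ℝ :=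
  Real.sqrt (∑ i, ∑ j, A i j ^ 2)

open Finset

open Finset

lemma telescope (A : ℕ → ℝ) : ∀ m j, j ≤ m → ∑ p ∈ Finset.Ico j m, (A p - A (p+1)) = A j - A m := by
  intro m
  induction m with
  | zero => intro j hj; interval_cases j; simp
  | succ m ih =>
    intro j hj
    rcases Nat.lt_or_ge j (m+1) with h | h
    · have hjm : j ≤ m := Nat.lt_succ_iff.mp h
      rw [Finset.sum_Ico_succ_top hjm, ih j hjm]; ring
    · have : j = m+1 := le_antisymm hj h
      subst this; simp

lemma count_le (n m : ℕ) (hm : m < n) :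
    ∑ i ∈ range n, (if i ≤ m then (1:ℝ) else 0) = (m : ℝ) + 1 := by
  rw [← Finset.sum_filter]
  have : (range n).filter (fun i => i ≤ m) = range (m+1) := by
    ext i; simp only [mem_filter, mem_range]; omega
  simp [this]

lemma rearrange_nat (n : ℕ) (A B : ℕ → ℝ)
    (hA1 : ∀ i, A (i+1) ≤ A i) (hAn : A n = 0)
    (hB1 : ∀ i, B (i+1) ≤ B i) (hBn : B n = 0)
    (D : ℕ → ℕ → ℝ) (hD0 : ∀ i j, 0 ≤ D i j)
    (hrow : ∀ i < n, ∑ j ∈ Finset.range n, D i j = 1)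
    (hcol : ∀ j < n, ∑ i ∈ Finset.range n, D i j = 1) :
    ∑ i ∈ Finset.range n, ∑ j ∈ Finset.range n, A i * B j * D i j ≤
      ∑ i ∈ Finset.range n, A i * B i := by
  set α : ℕ → ℝ := fun p => A p - A (p+1) with hα
  set β : ℕ → ℝ := fun q => B q - B (q+1) with hβ
  have hα0 : ∀ p, 0 ≤ α p := fun p => sub_nonneg.mpr (hA1 p)
  have hβ0 : ∀ q, 0 ≤ β q := fun q => sub_nonneg.mpr (hB1 q)
  have claimA : ∀ i < n, A i = ∑ p ∈ range n, if i ≤ p then α p else 0 := by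
    intro i hi
    rw [← Finset.sum_filter]
    have hf : (range n).filter (fun p => i ≤ p) = Finset.Ico i n := by
      ext p; simp only [mem_filter, mem_range, mem_Ico]; omega
    rw [hf, telescope A n i hi.le, hAn, sub_zero]
  have claimB : ∀ j < n, B j = ∑ q ∈ range n, if j ≤ q then β q else 0 := by
    intro j hj
    rw [← Finset.sum_filter]
    have hf : (range n).filter (fun q => j ≤ q) = Finset.Ico j n := by
      ext q; simp only [mem_filter, mem_range, mem_Ico]; omega
    rw [hf, telescope B n j hj.le, hBn, sub_zero]
  set P : Finset (ℕ × ℕ) := range n ×ˢ range n with hP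
  set S : ℕ × ℕ → ℝ := fun y => ∑ x ∈ P, if x.1 ≤ y.1 ∧ x.2 ≤ y.2 then D x.1 x.2 else 0 with hS
  set T : ℕ × ℕ → ℝ := fun y => ∑ i ∈ range n, if i ≤ y.1 ∧ i ≤ y.2 then (1:ℝ) else 0 with hT
  have lhs_eq : ∑ i ∈ range n, ∑ j ∈ range n, A i * B j * D i j
      = ∑ y ∈ P, α y.1 * β y.2 * S y := by
    have hprod : ∑ x ∈ P, A x.1 * B x.2 * D x.1 x.2 = ∑ i ∈ range n, ∑ j ∈ range n, A i * B j * D i j := by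
      rw [hP]; exact Finset.sum_product' _ _ (fun i j => A i * B j * D i j)
    rw [← hprod]
    have step1 : ∑ x ∈ P, A x.1 * B x.2 * D x.1 x.2
        = ∑ x ∈ P, ∑ y ∈ P, (if x.1 ≤ y.1 then α y.1 else 0) * (if x.2 ≤ y.2 then β y.2 else 0) * D x.1 x.2 := by
      refine Finset.sum_congr rfl fun x hx => ?_
      obtain ⟨hx1, hx2⟩ := Finset.mem_product.mp hx
      rw [claimA x.1 (mem_range.mp hx1), claimB x.2 (mem_range.mp hx2),
        Finset.sum_mul_sum, Finset.sum_product]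
      rw [Finset.sum_mul]
      refine Finset.sum_congr rfl fun p _ => ?_
      rw [Finset.sum_mul]
    rw [step1, Finset.sum_comm]
    refine Finset.sum_congr rfl fun y hy => ?_
    rw [Finset.mul_sum]
    refine Finset.sum_congr rfl fun x hx => ?_
    by_cases h1 : x.1 ≤ y.1 <;> by_cases h2 : x.2 ≤ y.2 <;> simp [h1, h2] <;> ring
  have rhs_eq : ∑ i ∈ range n, A i * B i = ∑ y ∈ P, α y.1 * β y.2 * T y := by
    have step1 : ∑ i ∈ range n, A i * B i
        = ∑ i ∈ range n, ∑ y ∈ P, α y.1 * β y.2 * (if i ≤ y.1 ∧ i ≤ y.2 then (1:ℝ) else 0) := by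
      refine Finset.sum_congr rfl fun i hi => ?_
      rw [claimA i (mem_range.mp hi), claimB i (mem_range.mp hi),
        Finset.sum_mul_sum, ← Finset.sum_product']
      refine Finset.sum_congr rfl fun y hy => ?_
      by_cases h1 : i ≤ y.1 <;> by_cases h2 : i ≤ y.2 <;> simp [h1, h2]
    rw [step1, Finset.sum_comm]
    refine Finset.sum_congr rfl fun y hy => ?_
    rw [hT, Finset.mul_sum]
  rw [lhs_eq, rhs_eq]
  refine Finset.sum_le_sum fun y hy => ?_
  obtain ⟨hy1, hy2⟩ := Finset.mem_product.mp hy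
  have hy1 := mem_range.mp hy1
  have hy2 := mem_range.mp hy2
  have hST : S y ≤ T y := by
    have hT_eq : T y = ((min y.1 y.2 : ℕ) : ℝ) + 1 := by
      rw [hT]
      simp only [← le_min_iff]
      exact count_le n _ (lt_of_le_of_lt (min_le_left _ _) hy1)
    have h1 : S y ≤ (y.1 : ℝ) + 1 := by
      rw [hS]
      calc ∑ x ∈ P, (if x.1 ≤ y.1 ∧ x.2 ≤ y.2 then D x.1 x.2 else 0)
          = ∑ i ∈ range n, ∑ j ∈ range n, (if i ≤ y.1 ∧ j ≤ y.2 then D i j else 0) := by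
            rw [hP]; exact Finset.sum_product' _ _ (fun i j => if i ≤ y.1 ∧ j ≤ y.2 then D i j else 0)
        _ ≤ ∑ i ∈ range n, (if i ≤ y.1 then (∑ j ∈ range n, D i j) else 0) := by
            refine Finset.sum_le_sum fun i hi => ?_
            by_cases h : i ≤ y.1
            · simp only [h, if_true]
              refine Finset.sum_le_sum fun j hj => ?_
              by_cases h2 : j ≤ y.2 <;> simp [h, h2, hD0 i j]
            · simp [h]
        _ = ∑ i ∈ range n, (if i ≤ y.1 then (1:ℝ) else 0) := by
            refine Finset.sum_congr rfl fun i hi => ?_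
            by_cases h : i ≤ y.1 <;> simp [h, hrow i (mem_range.mp hi)]
        _ = (y.1 : ℝ) + 1 := count_le n _ hy1
    have h2 : S y ≤ (y.2 : ℝ) + 1 := by
      rw [hS]
      calc ∑ x ∈ P, (if x.1 ≤ y.1 ∧ x.2 ≤ y.2 then D x.1 x.2 else 0)
          = ∑ i ∈ range n, ∑ j ∈ range n, (if i ≤ y.1 ∧ j ≤ y.2 then D i j else 0) := by
            rw [hP]; exact Finset.sum_product' _ _ (fun i j => if i ≤ y.1 ∧ j ≤ y.2 then D i j else 0)
        _ = ∑ j ∈ range n, ∑ i ∈ range n, (if i ≤ y.1 ∧ j ≤ y.2 then D i j else 0) := Finset.sum_comm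
        _ ≤ ∑ j ∈ range n, (if j ≤ y.2 then (∑ i ∈ range n, D i j) else 0) := by
            refine Finset.sum_le_sum fun j hj => ?_
            by_cases h : j ≤ y.2
            · simp only [h, if_true]
              refine Finset.sum_le_sum fun i hi => ?_
              by_cases h1 : i ≤ y.1 <;> simp [h, h1, hD0 i j]
            · simp [h]
        _ = ∑ j ∈ range n, (if j ≤ y.2 then (1:ℝ) else 0) := by
            refine Finset.sum_congr rfl fun j hj => ?_
            by_cases h : j ≤ y.2 <;> simp [h, hcol j (mem_range.mp hj)]
        _ = (y.2 : ℝ) + 1 := count_le n _ hy2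
    rw [hT_eq]
    rcases le_total y.1 y.2 with h | h
    · rw [min_eq_left h]; exact h1
    · rw [min_eq_right h]; exact h2
  have hαβ : 0 ≤ α y.1 * β y.2 := mul_nonneg (hα0 _) (hβ0 _)
  exact mul_le_mul_of_nonneg_left hST hαβ
lemma rearrange {n : ℕ} (a b : Fin n → ℝ) (ha : Antitone a) (ha0 : ∀ i, 0 ≤ a i)
    (hb : Antitone b) (hb0 : ∀ i, 0 ≤ b i)
    (D : Fin n → Fin n → ℝ) (hD0 : ∀ i j, 0 ≤ D i j)
    (hrow : ∀ i, ∑ j, D i j = 1) (hcol : ∀ j, ∑ i, D i j = 1) :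
    ∑ i, ∑ j, a i * b j * D i j ≤ ∑ i, a i * b i := by
  set A : ℕ → ℝ := fun i => if h : i < n then a ⟨i, h⟩ else 0 with hA
  set B : ℕ → ℝ := fun i => if h : i < n then b ⟨i, h⟩ else 0 with hB
  set D' : ℕ → ℕ → ℝ := fun i j => if h : i < n ∧ j < n then D ⟨i, h.1⟩ ⟨j, h.2⟩ else 0 with hD'
  have hA1 : ∀ i, A (i+1) ≤ A i := by
    intro i
    by_cases h : i + 1 < n
    · have h' : i < n := by omega
      simp only [hA, dif_pos h, dif_pos h']
      exact ha (by simp [Fin.le_def])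
    · by_cases h' : i < n
      · simp only [hA, dif_neg h, dif_pos h']; exact ha0 _
      · simp [hA, h, h']
  have hB1 : ∀ i, B (i+1) ≤ B i := by
    intro i
    by_cases h : i + 1 < n
    · have h' : i < n := by omega
      simp only [hB, dif_pos h, dif_pos h']
      exact hb (by simp [Fin.le_def])
    · by_cases h' : i < n
      · simp only [hB, dif_neg h, dif_pos h']; exact hb0 _
      · simp [hB, h, h']
  have hAn : A n = 0 := by simp [hA]
  have hBn : B n = 0 := by simp [hB]
  have hD0' : ∀ i j, 0 ≤ D' i j := by
    intro i j; by_cases h : i < n ∧ j < n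
    · simp only [hD', dif_pos h]; exact hD0 _ _
    · simp [hD', h]
  have hconvD : ∀ (i : Fin n) (j : Fin n), D' ↑i ↑j = D i j := by
    intro i j; simp [hD', i.isLt, j.isLt]
  have hconvA : ∀ (i : Fin n), A ↑i = a i := by intro i; simp [hA, i.isLt]
  have hconvB : ∀ (i : Fin n), B ↑i = b i := by intro i; simp [hB, i.isLt]
  have hrow' : ∀ i < n, ∑ j ∈ range n, D' i j = 1 := by
    intro i hi
    rw [← Fin.sum_univ_eq_sum_range (fun j => D' i j) n]
    rw [show (∑ j : Fin n, D' i ↑j) = ∑ j : Fin n, D ⟨i, hi⟩ j from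
      Finset.sum_congr rfl fun j _ => by simp [hD', hi, j.isLt]]
    exact hrow _
  have hcol' : ∀ j < n, ∑ i ∈ range n, D' i j = 1 := by
    intro j hj
    rw [← Fin.sum_univ_eq_sum_range (fun i => D' i j) n]
    rw [show (∑ i : Fin n, D' ↑i j) = ∑ i : Fin n, D i ⟨j, hj⟩ from
      Finset.sum_congr rfl fun i _ => by simp [hD', hj, i.isLt]]
    exact hcol _
  have key := rearrange_nat n A B hA1 hAn hB1 hBn D' hD0' hrow' hcol'
  have e1 : ∑ i, ∑ j, a i * b j * D i j = ∑ i ∈ range n, ∑ j ∈ range n, A i * B j * D' i j := by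
    rw [← Fin.sum_univ_eq_sum_range (fun i => ∑ j ∈ range n, A i * B j * D' i j) n]
    refine Finset.sum_congr rfl fun i _ => ?_
    rw [← Fin.sum_univ_eq_sum_range (fun j => A ↑i * B j * D' ↑i j) n]
    exact Finset.sum_congr rfl fun j _ => by rw [hconvA, hconvB, hconvD]
  have e2 : ∑ i, a i * b i = ∑ i ∈ range n, A i * B i := by
    rw [← Fin.sum_univ_eq_sum_range (fun i => A i * B i) n]
    exact Finset.sum_congr rfl fun i _ => by rw [hconvA, hconvB]
  rw [e1, e2]; exact key
open Matrix in
/-- If `W_L ∈ ℝ^{K×d}` and `W_{L−1} ∈ ℝ^{d×d}` are δ-balanced, i.e.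
`‖W_LᵀW_L − W_{L−1}W_{L−1}ᵀ‖_F ≤ δ`, and `Σ_L`, `Σ_{L−1}` are their diagonal
matrices of singular values in decreasing order (given by SVDs), then
`‖Σ_LᵀΣ_L − Σ_{L−1}²‖_F ≤ δ`. -/
theorem sigma_balancedness {K d : ℕ} (hKd : K ≤ d) (δ : ℝ)
    (WL : Matrix (Fin K) (Fin d) ℝ) (W : Matrix (Fin d) (Fin d) ℝ)
    (sL : Fin K → ℝ) (s : Fin d → ℝ)
    (UL : Matrix (Fin K) (Fin K) ℝ) (VL U V : Matrix (Fin d) (Fin d) ℝ)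
    (hUL : ULᵀ * UL = 1) (hVL : VLᵀ * VL = 1) (hU : Uᵀ * U = 1) (hV : Vᵀ * V = 1)
    (hsL : Antitone sL) (hsL0 : ∀ i, 0 ≤ sL i)
    (hs : Antitone s) (hs0 : ∀ i, 0 ≤ s i)
    (SigL : Matrix (Fin K) (Fin d) ℝ)
    (hSigL : SigL = Matrix.of fun (i : Fin K) (j : Fin d) => if (i : ℕ) = (j : ℕ) then sL i else 0)
    (hWL : WL = UL * SigL * VLᵀ)
    (hW : W = U * Matrix.diagonal s * Vᵀ)
    (hbal : frobNorm (WLᵀ * WL - W * Wᵀ) ≤ δ) :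
    frobNorm (SigLᵀ * SigL - Matrix.diagonal s * Matrix.diagonal s) ≤ δ := by
  classical
  set a : Fin d → ℝ := fun j => if h : (j:ℕ) < K then sL ⟨j, h⟩ * sL ⟨j, h⟩ else 0 with hadef
  set b : Fin d → ℝ := fun j => s j * s j with hbdef
  -- SigLᵀ * SigL = diagonal a
  have hDiagA : SigLᵀ * SigL = Matrix.diagonal a := by
    ext j k
    simp only [hSigL, Matrix.mul_apply, Matrix.transpose_apply, Matrix.of_apply,
      Matrix.diagonal_apply]
    by_cases hjk : j = k
    · subst hjk
      rw [if_pos rfl]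
      by_cases h : (j:ℕ) < K
      · have hterm : ∀ i : Fin K,
            ((if (i:ℕ) = (j:ℕ) then sL i else 0) * (if (i:ℕ) = (j:ℕ) then sL i else 0))
              = if i = (⟨↑j, h⟩ : Fin K) then sL ⟨↑j, h⟩ * sL ⟨↑j, h⟩ else 0 := by
          intro i
          by_cases hh : (i:ℕ) = (j:ℕ)
          · have hi : i = (⟨↑j, h⟩ : Fin K) := Fin.ext hh
            simp [hh, hi]
          · have hi : ¬ (i = (⟨↑j, h⟩ : Fin K)) := fun e => hh (by rw [e])
            simp [hh, hi]
        rw [Finset.sum_congr rfl fun i _ => hterm i, Finset.sum_ite_eq' Finset.univ _ _]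
        simp [hadef, h]
      · rw [show a j = 0 by simp [hadef, h]]
        refine Finset.sum_eq_zero fun i _ => ?_
        have : (i:ℕ) ≠ (j:ℕ) := by have := i.isLt; omega
        simp [this]
    · rw [if_neg hjk]
      refine Finset.sum_eq_zero fun i _ => ?_
      by_cases h1 : (i:ℕ) = (j:ℕ)
      · by_cases h2 : (i:ℕ) = (k:ℕ)
        · exact absurd (Fin.ext (h1.symm.trans h2) : j = k) hjk
        · simp [h2]
      · simp [h1]
  have hDiagB : Matrix.diagonal s * Matrix.diagonal s = Matrix.diagonal b := by
    rw [Matrix.diagonal_mul_diagonal]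
  -- antitone / nonneg
  have ha0 : ∀ i, 0 ≤ a i := by
    intro i; by_cases h : (i:ℕ) < K
    · simp only [hadef, dif_pos h]; exact mul_nonneg (hsL0 _) (hsL0 _)
    · simp only [hadef]; rw [dif_neg h]
  have hb0 : ∀ i, 0 ≤ b i := fun i => mul_nonneg (hs0 i) (hs0 i)
  have haanti : Antitone a := by
    intro j k hjk
    by_cases hk : (k:ℕ) < K
    · have hj : (j:ℕ) < K := lt_of_le_of_lt hjk hk
      simp only [hadef, dif_pos hk, dif_pos hj]
      have h1 : sL ⟨↑k, hk⟩ ≤ sL ⟨↑j, hj⟩ := hsL (by simp only [Fin.le_def]; exact Fin.le_def.mp hjk)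
      exact mul_le_mul h1 h1 (hsL0 _) (hsL0 _)
    · simp only [hadef, dif_neg hk]; exact ha0 j
  have hbanti : Antitone b := by
    intro j k hjk
    exact mul_le_mul (hs hjk) (hs hjk) (hs0 _) (hs0 _)
  -- orthogonal Q
  set Q : Matrix (Fin d) (Fin d) ℝ := VLᵀ * U with hQdef
  have hUUt : U * Uᵀ = 1 := mul_eq_one_comm.mp hU
  have hVLVLt : VL * VLᵀ = 1 := mul_eq_one_comm.mp hVL
  have hQQt : Q * Qᵀ = 1 := by
    rw [hQdef, Matrix.transpose_mul, Matrix.transpose_transpose, Matrix.mul_assoc,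
      ← Matrix.mul_assoc U Uᵀ VL, hUUt, Matrix.one_mul, hVL]
  have hQtQ : Qᵀ * Q = 1 := by
    rw [hQdef, Matrix.transpose_mul, Matrix.transpose_transpose, Matrix.mul_assoc,
      ← Matrix.mul_assoc VL VLᵀ U, hVLVLt, Matrix.one_mul, hU]
  have hrowD : ∀ i, ∑ j, Q i j * Q i j = 1 := by
    intro i
    have h := congrArg (fun M : Matrix (Fin d) (Fin d) ℝ => M i i) hQQt
    simpa [Matrix.mul_apply, Matrix.one_apply] using h
  have hcolD : ∀ j, ∑ i, Q i j * Q i j = 1 := by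
    intro j
    have h := congrArg (fun M : Matrix (Fin d) (Fin d) ℝ => M j j) hQtQ
    simpa [Matrix.mul_apply, Matrix.one_apply] using h
  have hD0 : ∀ i j, (0:ℝ) ≤ Q i j * Q i j := fun i j => mul_self_nonneg _
  -- structural forms
  set Da := Matrix.diagonal a with hDa
  set Db := Matrix.diagonal b with hDb
  have hM : WLᵀ * WL = VL * Da * VLᵀ := by
    rw [hWL]
    simp only [Matrix.transpose_mul, Matrix.transpose_transpose, Matrix.mul_assoc]
    rw [← Matrix.mul_assoc ULᵀ UL, hUL, Matrix.one_mul, ← Matrix.mul_assoc SigLᵀ SigL, hDiagA]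
  have hN : W * Wᵀ = U * Db * Uᵀ := by
    rw [hW]
    simp only [Matrix.transpose_mul, Matrix.transpose_transpose, Matrix.diagonal_transpose,
      Matrix.mul_assoc]
    rw [← Matrix.mul_assoc Vᵀ V, hV, Matrix.one_mul,
      ← Matrix.mul_assoc (Matrix.diagonal s) (Matrix.diagonal s), hDiagB]
  -- trace identities
  have hfro : ∀ E : Matrix (Fin d) (Fin d) ℝ, ∑ i, ∑ j, E i j ^ 2 = Matrix.trace (E * Eᵀ) := by
    intro E
    simp [Matrix.trace, Matrix.diag, Matrix.mul_apply, sq]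
  have tconj : ∀ c : Fin d → ℝ, ∀ (R : Matrix (Fin d) (Fin d) ℝ), Rᵀ * R = 1 →
      Matrix.trace ((R * Matrix.diagonal c * Rᵀ) * (R * Matrix.diagonal c * Rᵀ))
        = ∑ i, c i * c i := by
    intro c R hR
    have h1 : (R * Matrix.diagonal c * Rᵀ) * (R * Matrix.diagonal c * Rᵀ)
        = R * ((Matrix.diagonal c * Matrix.diagonal c) * Rᵀ) := by
      simp only [Matrix.mul_assoc]
      rw [← Matrix.mul_assoc Rᵀ R, hR, Matrix.one_mul]
    rw [h1, Matrix.trace_mul_comm, Matrix.mul_assoc, hR, Matrix.mul_one,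
      Matrix.diagonal_mul_diagonal, Matrix.trace_diagonal]
  have tMM : Matrix.trace ((VL * Da * VLᵀ) * (VL * Da * VLᵀ)) = ∑ i, a i * a i :=
    tconj a VL hVL
  have tNN : Matrix.trace ((U * Db * Uᵀ) * (U * Db * Uᵀ)) = ∑ i, b i * b i :=
    tconj b U hU
  have tMN : Matrix.trace ((VL * Da * VLᵀ) * (U * Db * Uᵀ))
      = ∑ i, ∑ j, a i * b j * (Q i j * Q i j) := by
    calc Matrix.trace ((VL * Da * VLᵀ) * (U * Db * Uᵀ))
        = Matrix.trace (VL * (Da * (VLᵀ * (U * (Db * Uᵀ))))) := by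
          simp only [Matrix.mul_assoc]
      _ = Matrix.trace ((Da * (VLᵀ * (U * (Db * Uᵀ)))) * VL) := Matrix.trace_mul_comm _ _
      _ = Matrix.trace (Da * (Q * (Db * Qᵀ))) := by
          rw [hQdef, Matrix.transpose_mul, Matrix.transpose_transpose]
          simp only [Matrix.mul_assoc]
      _ = ∑ i, ∑ j, a i * b j * (Q i j * Q i j) := by
          simp only [Matrix.trace, Matrix.diag, Matrix.mul_apply, Matrix.diagonal_apply,
            hDa, hDb]
          refine Finset.sum_congr rfl fun i _ => ?_
          rw [Finset.sum_eq_single i ?_ ?_]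
          · rw [if_pos rfl, Finset.mul_sum]
            refine Finset.sum_congr rfl fun j _ => ?_
            rw [Finset.sum_eq_single j ?_ ?_]
            · rw [if_pos rfl, Matrix.transpose_apply]; ring
            · intro k _ hk; rw [if_neg (Ne.symm hk), zero_mul]
            · intro h; exact absurd (Finset.mem_univ j) h
          · intro k _ hk; rw [if_neg (Ne.symm hk), zero_mul]
          · intro h; exact absurd (Finset.mem_univ i) h
  have tNM : Matrix.trace ((U * Db * Uᵀ) * (VL * Da * VLᵀ))
      = ∑ i, ∑ j, a i * b j * (Q i j * Q i j) := by
    rw [Matrix.trace_mul_comm, tMN]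
  -- Frobenius sums
  have hEt : (WLᵀ * WL - W * Wᵀ)ᵀ = WLᵀ * WL - W * Wᵀ := by
    rw [hM, hN]
    simp only [Matrix.transpose_sub, Matrix.transpose_mul, Matrix.transpose_transpose,
      hDa, hDb, Matrix.diagonal_transpose, Matrix.mul_assoc]
  have hlsum : ∑ i, ∑ j, (WLᵀ * WL - W * Wᵀ) i j ^ 2
      = (∑ i, a i * a i) + (∑ i, b i * b i)
        - 2 * ∑ i, ∑ j, a i * b j * (Q i j * Q i j) := by
    rw [hfro, hEt, sub_mul, mul_sub, mul_sub, Matrix.trace_sub, Matrix.trace_sub,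
      Matrix.trace_sub, hM, hN, tMM, tNN, tMN, tNM]
    ring
  have hgsum : ∑ i, ∑ j, (Matrix.diagonal a - Matrix.diagonal b : Matrix (Fin d) (Fin d) ℝ) i j ^ 2
      = (∑ i, a i * a i) + (∑ i, b i * b i) - 2 * ∑ i, a i * b i := by
    have h1 : ∀ i : Fin d, ∑ j, (Matrix.diagonal a - Matrix.diagonal b : Matrix (Fin d) (Fin d) ℝ) i j ^ 2
        = (a i - b i) ^ 2 := by
      intro i
      rw [Finset.sum_eq_single i ?_ ?_]
      · simp [Matrix.sub_apply, Matrix.diagonal_apply]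
      · intro k _ hk
        simp [Matrix.sub_apply, Matrix.diagonal_apply, Ne.symm hk]
      · intro h; exact absurd (Finset.mem_univ i) h
    rw [Finset.sum_congr rfl fun i _ => h1 i]
    have h2 : ∀ i : Fin d, (a i - b i) ^ 2 = a i * a i + b i * b i - 2 * (a i * b i) :=
      fun i => by ring
    rw [Finset.sum_congr rfl fun i _ => h2 i, Finset.sum_sub_distrib,
      Finset.sum_add_distrib, ← Finset.mul_sum]
  -- key inequality
  have hkey : ∑ i, ∑ j, a i * b j * (Q i j * Q i j) ≤ ∑ i, a i * b i :=
    rearrange a b haanti ha0 hbanti hb0 (fun i j => Q i j * Q i j) hD0 hrowD hcolD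
  have hle : ∑ i, ∑ j, (Matrix.diagonal a - Matrix.diagonal b : Matrix (Fin d) (Fin d) ℝ) i j ^ 2
      ≤ ∑ i, ∑ j, (WLᵀ * WL - W * Wᵀ) i j ^ 2 := by
    rw [hlsum, hgsum]; linarith
  have hfinal : SigLᵀ * SigL - Matrix.diagonal s * Matrix.diagonal s
      = Matrix.diagonal a - Matrix.diagonal b := by rw [hDiagA, hDiagB]
  rw [hfinal]
  refine le_trans ?_ hbal
  unfold frobNorm
  exact Real.sqrt_le_sqrt hle
end

section
/- If the end-to-end product equals the minimum-norm interpolator W_{L:1} = Y(XᵀX)^{-1}Xᵀ with Y = I_K ⊗ 1_nᵀ and X is θ-nearly orthonormal (θ ∈ [0,1/4)), then the K-th largest and the largest singular values of W_{L:1} satisfy √n/√(1+θ) ≤ σ_K(W_{L:1}) ≤ σ_1(W_{L:1}) ≤ √n/√(1−θ). -/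
open scoped BigOperators
open Matrix

private lemma dot_self_nonneg' {I : Type*} [Fintype I] (v : I → ℝ) : 0 ≤ v ⬝ᵥ v :=
  Finset.sum_nonneg fun i _ => mul_self_nonneg (v i)

private lemma dot_self_eq_sum_sq {I : Type*} [Fintype I] (v : I → ℝ) :
    v ⬝ᵥ v = ∑ i, v i ^ 2 := by
  simp [dotProduct, sq]

private lemma dot_sq_le {I : Type*} [Fintype I] (a b : I → ℝ) :
    (a ⬝ᵥ b) ^ 2 ≤ (a ⬝ᵥ a) * (b ⬝ᵥ b) := by
  have := Finset.sum_mul_sq_le_sq_mul_sq Finset.univ a b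
  simpa [dotProduct, sq] using this

private lemma bilin_symm {I : Type*} [Fintype I] (A : Matrix I I ℝ) (hA : Aᵀ = A)
    (y z : I → ℝ) : y ⬝ᵥ A.mulVec z = (A.mulVec y) ⬝ᵥ z := by
  rw [Matrix.dotProduct_mulVec]
  congr 1
  conv_lhs => rw [← hA]
  exact Matrix.vecMul_transpose A y

private lemma psd_cauchy {I : Type*} [Fintype I] (A : Matrix I I ℝ) (hA : Aᵀ = A)
    (hpsd : ∀ x : I → ℝ, 0 ≤ x ⬝ᵥ A.mulVec x) (y z : I → ℝ) :
    (y ⬝ᵥ A.mulVec z) ^ 2 ≤ (y ⬝ᵥ A.mulVec y) * (z ⬝ᵥ A.mulVec z) := by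
  have hsymm : z ⬝ᵥ A.mulVec y = y ⬝ᵥ A.mulVec z := by
    rw [bilin_symm A hA z y, dotProduct_comm]
  have key : ∀ t : ℝ, 0 ≤ (y ⬝ᵥ A.mulVec y) * (t * t) + (2 * (y ⬝ᵥ A.mulVec z)) * t
      + z ⬝ᵥ A.mulVec z := by
    intro t
    have h := hpsd (z + t • y)
    have hexp : (z + t • y) ⬝ᵥ A.mulVec (z + t • y)
        = (y ⬝ᵥ A.mulVec y) * (t * t) + (2 * (y ⬝ᵥ A.mulVec z)) * t + z ⬝ᵥ A.mulVec z := by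
      simp only [Matrix.mulVec_add, Matrix.mulVec_smul, dotProduct_add,
        add_dotProduct, dotProduct_smul, smul_dotProduct, smul_eq_mul, hsymm]
      ring
    linarith [hexp ▸ h]
  have hd := discrim_le_zero key
  rw [discrim] at hd
  nlinarith [hd]

private lemma key_lower {I : Type*} [Fintype I] [DecidableEq I] (G : Matrix I I ℝ)
    (hG : Gᵀ = G) (θ : ℝ) (hθ0 : 0 ≤ θ) (hθ1 : θ ≤ 1)
    (hlow : ∀ y : I → ℝ, (1 - θ) * (y ⬝ᵥ y) ≤ y ⬝ᵥ G.mulVec y)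
    (hhigh : ∀ y : I → ℝ, y ⬝ᵥ G.mulVec y ≤ (1 + θ) * (y ⬝ᵥ y))
    (z : I → ℝ) :
    (G.mulVec z) ⬝ᵥ (G.mulVec z) ≤ (1 + θ) * (z ⬝ᵥ G.mulVec z) := by
  set A : Matrix I I ℝ := (1 + θ) • (1 : Matrix I I ℝ) - G with hAdef
  have hAsym : Aᵀ = A := by
    rw [hAdef, Matrix.transpose_sub, Matrix.transpose_smul, Matrix.transpose_one, hG]
  have hAmv : ∀ y : I → ℝ, A.mulVec y = (1 + θ) • y - G.mulVec y := by
    intro y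
    rw [hAdef, Matrix.sub_mulVec, Matrix.smul_mulVec, Matrix.one_mulVec]
  have hQA : ∀ y : I → ℝ, y ⬝ᵥ A.mulVec y = (1 + θ) * (y ⬝ᵥ y) - y ⬝ᵥ G.mulVec y := by
    intro y
    rw [hAmv, dotProduct_sub, dotProduct_smul, smul_eq_mul]
  have hApsd : ∀ y : I → ℝ, 0 ≤ y ⬝ᵥ A.mulVec y := fun y => by
    rw [hQA]; linarith [hhigh y]
  have hAub : ∀ y : I → ℝ, y ⬝ᵥ A.mulVec y ≤ 2 * θ * (y ⬝ᵥ y) := fun y => by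
    rw [hQA]; linarith [hlow y]
  set w := A.mulVec z with hw
  have hs0 : 0 ≤ w ⬝ᵥ w := dot_self_nonneg' w
  have hzAw : z ⬝ᵥ A.mulVec w = w ⬝ᵥ w := by
    rw [bilin_symm A hAsym z w]
  have hcs := psd_cauchy A hAsym hApsd z w
  rw [hzAw] at hcs
  have hwAw : w ⬝ᵥ A.mulVec w ≤ 2 * θ * (w ⬝ᵥ w) := hAub w
  have hzA0 : 0 ≤ z ⬝ᵥ A.mulVec z := hApsd z
  have hsle : w ⬝ᵥ w ≤ 2 * θ * (z ⬝ᵥ A.mulVec z) := by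
    rcases eq_or_lt_of_le hs0 with h0 | h0
    · nlinarith [mul_nonneg hθ0 hzA0]
    · nlinarith [mul_le_mul_of_nonneg_left hwAw hzA0]
  have hid : (G.mulVec z) ⬝ᵥ (G.mulVec z)
      = w ⬝ᵥ w - (1 + θ) * (z ⬝ᵥ A.mulVec z) + (1 + θ) * (z ⬝ᵥ G.mulVec z) := by
    have hexp : w ⬝ᵥ w = (1 + θ) ^ 2 * (z ⬝ᵥ z) - 2 * (1 + θ) * (z ⬝ᵥ G.mulVec z)
        + (G.mulVec z) ⬝ᵥ (G.mulVec z) := by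
      rw [hw, hAmv]
      simp only [sub_dotProduct, dotProduct_sub, smul_dotProduct,
        dotProduct_smul, smul_eq_mul, dotProduct_comm (G.mulVec z) z]
      ring
    rw [hexp, hQA]
    ring
  rw [hid]
  have h2 : (0:ℝ) ≤ (1 - θ) * (z ⬝ᵥ A.mulVec z) :=
    mul_nonneg (by linarith) hzA0
  linarith [hsle]

/-- For the minimum-norm interpolator `W = Y(XᵀX)⁻¹Xᵀ` with one-hot label
matrix `Y = I_K ⊗ 1_nᵀ` and θ-nearly orthonormal data `X` (θ ∈ [0,1/4),
`d ≥ N = nK`), the `K`-th and first singular values of `W` satisfy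
`√(n/(1+θ)) ≤ σ_K(W) ≤ σ_1(W) ≤ √(n/(1−θ))`, expressed as
`√(n/(1+θ))·‖u‖ ≤ ‖Wᵀu‖` for all `u ∈ ℝ^K` and `‖Wv‖ ≤ √(n/(1−θ))·‖v‖`
for all `v ∈ ℝ^d`. -/
theorem min_norm_interpolator_singular_values {d K n : ℕ}
    (hn : 0 < n) (hK : 0 < K) (hdN : n * K ≤ d)
    (X : Matrix (Fin d) (Fin K × Fin n) ℝ) (θ : ℝ) (hθ0 : 0 ≤ θ) (hθ : θ < 1 / 4)
    (hnorm : ∀ c, |(∑ i, X i c ^ 2) - 1| ≤ θ / (n * K))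
    (hinner : ∀ c c', c ≠ c' → |∑ i, X i c * X i c'| ≤ θ / (n * K))
    (Y : Matrix (Fin K) (Fin K × Fin n) ℝ)
    (hY : Y = Matrix.of fun (k : Fin K) (c : Fin K × Fin n) => if c.1 = k then (1 : ℝ) else 0)
    (W : Matrix (Fin K) (Fin d) ℝ) (hW : W = Y * (Xᵀ * X)⁻¹ * Xᵀ) :
    (∀ u : Fin K → ℝ,
      Real.sqrt (n / (1 + θ)) * euclNorm u ≤ euclNorm (Wᵀ.mulVec u)) ∧
    (∀ v : Fin d → ℝ,
      euclNorm (W.mulVec v) ≤ Real.sqrt (n / (1 - θ)) * euclNorm v) := by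
  have hn' : (0:ℝ) < n := by exact_mod_cast hn
  have hK' : (0:ℝ) < K := by exact_mod_cast hK
  have hNpos : (0:ℝ) < (n:ℝ) * (K:ℝ) := mul_pos hn' hK'
  have h1θ : (0:ℝ) < 1 + θ := by linarith
  have h1θ' : (0:ℝ) < 1 - θ := by linarith
  set G := Xᵀ * X with hGdef
  have hGsym : Gᵀ = G := by
    rw [hGdef, Matrix.transpose_mul, Matrix.transpose_transpose]
  have hent : ∀ c c' : Fin K × Fin n,
      |G c c' - if c = c' then 1 else 0| ≤ θ / ((n:ℝ) * (K:ℝ)) := by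
    intro c c'
    have hGe : G c c' = ∑ i, X i c * X i c' := by
      simp [hGdef, Matrix.mul_apply, Matrix.transpose_apply]
    by_cases h : c = c'
    · subst h
      rw [if_pos rfl, hGe]
      have he : (∑ i, X i c * X i c) = ∑ i, X i c ^ 2 := by
        exact Finset.sum_congr rfl fun i _ => (sq (X i c)).symm
      rw [he]
      exact hnorm c
    · rw [if_neg h, sub_zero, hGe]
      exact hinner c c' h
  have hQabs : ∀ z : Fin K × Fin n → ℝ, |z ⬝ᵥ G.mulVec z - z ⬝ᵥ z| ≤ θ * (z ⬝ᵥ z) := by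
    intro z
    have e1 : z ⬝ᵥ G.mulVec z - z ⬝ᵥ z
        = ∑ c, ∑ c', z c * z c' * (G c c' - if c = c' then 1 else 0) := by
      have l1 : z ⬝ᵥ G.mulVec z = ∑ c, ∑ c', z c * z c' * G c c' := by
        simp only [dotProduct, Matrix.mulVec, Finset.mul_sum]
        exact Finset.sum_congr rfl fun c _ => Finset.sum_congr rfl fun c' _ => by ring
      have l2 : z ⬝ᵥ z = ∑ c, ∑ c', z c * z c' * (if c = c' then (1:ℝ) else 0) := by
        simp only [mul_ite, mul_one, mul_zero]
        rw [dotProduct]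
        exact Finset.sum_congr rfl fun c _ => by
          rw [Finset.sum_ite_eq, if_pos (Finset.mem_univ c)]
      rw [l1, l2, ← Finset.sum_sub_distrib]
      exact Finset.sum_congr rfl fun c _ => by
        rw [← Finset.sum_sub_distrib]
        exact Finset.sum_congr rfl fun c' _ => by ring
    have e2 : |z ⬝ᵥ G.mulVec z - z ⬝ᵥ z|
        ≤ ∑ c, ∑ c', |z c| * |z c'| * (θ / ((n:ℝ) * (K:ℝ))) := by
      rw [e1]
      refine le_trans (Finset.abs_sum_le_sum_abs _ _) ?_
      refine Finset.sum_le_sum fun c _ => ?_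
      refine le_trans (Finset.abs_sum_le_sum_abs _ _) ?_
      refine Finset.sum_le_sum fun c' _ => ?_
      rw [abs_mul, abs_mul]
      exact mul_le_mul_of_nonneg_left (hent c c') (by positivity)
    have e3 : ∑ c, ∑ c', |z c| * |z c'| * (θ / ((n:ℝ) * (K:ℝ)))
        = (θ / ((n:ℝ) * (K:ℝ))) * ((∑ c, |z c|) * (∑ c, |z c|)) := by
      rw [Finset.sum_mul_sum, Finset.mul_sum]
      refine Finset.sum_congr rfl fun c _ => ?_
      rw [Finset.mul_sum]
      exact Finset.sum_congr rfl fun c' _ => by ring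
    have e4 : (∑ c, |z c|) * (∑ c, |z c|) ≤ ((n:ℝ) * (K:ℝ)) * (z ⬝ᵥ z) := by
      have hcs := Finset.sum_mul_sq_le_sq_mul_sq Finset.univ
        (fun _ : Fin K × Fin n => (1:ℝ)) (fun c => |z c|)
      simp only [one_mul, one_pow, sq_abs] at hcs
      have hcard : (∑ _c : Fin K × Fin n, (1:ℝ)) = (K:ℝ) * (n:ℝ) := by
        simp [Finset.card_univ]
      rw [hcard] at hcs
      rw [← sq, dot_self_eq_sum_sq]
      calc (∑ c, |z c|) ^ 2 ≤ ((K:ℝ) * (n:ℝ)) * ∑ c, z c ^ 2 := hcs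
        _ = ((n:ℝ) * (K:ℝ)) * ∑ c, z c ^ 2 := by ring
    calc |z ⬝ᵥ G.mulVec z - z ⬝ᵥ z|
        ≤ ∑ c, ∑ c', |z c| * |z c'| * (θ / ((n:ℝ) * (K:ℝ))) := e2
      _ = (θ / ((n:ℝ) * (K:ℝ))) * ((∑ c, |z c|) * (∑ c, |z c|)) := e3
      _ ≤ (θ / ((n:ℝ) * (K:ℝ))) * (((n:ℝ) * (K:ℝ)) * (z ⬝ᵥ z)) :=
          mul_le_mul_of_nonneg_left e4 (by positivity)
      _ = θ * (z ⬝ᵥ z) := by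
          field_simp
  have hlow : ∀ z : Fin K × Fin n → ℝ, (1 - θ) * (z ⬝ᵥ z) ≤ z ⬝ᵥ G.mulVec z := fun z => by
    have h := abs_le.mp (hQabs z)
    linarith [h.1]
  have hhigh : ∀ z : Fin K × Fin n → ℝ, z ⬝ᵥ G.mulVec z ≤ (1 + θ) * (z ⬝ᵥ z) := fun z => by
    have h := abs_le.mp (hQabs z)
    linarith [h.2]
  have hXp : ∀ z : Fin K × Fin n → ℝ,
      (X.mulVec z) ⬝ᵥ (X.mulVec z) = z ⬝ᵥ G.mulVec z := by
    intro z
    conv_rhs => rw [hGdef, ← Matrix.mulVec_mulVec, Matrix.dotProduct_mulVec,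
      Matrix.vecMul_transpose]
  have hherm : G.IsHermitian := by
    ext i j
    simp only [Matrix.conjTranspose_apply, star_trivial]
    exact congrFun (congrFun hGsym i) j
  have hGpd : G.PosDef := by
    refine Matrix.PosDef.of_dotProduct_mulVec_pos hherm fun x hx => ?_
    have hxx : 0 < x ⬝ᵥ x := by
      obtain ⟨i, hi⟩ := Function.ne_iff.mp hx
      have h1 : (0:ℝ) < x i ^ 2 := sq_pos_of_ne_zero hi
      have h2 : x i ^ 2 ≤ ∑ j, x j ^ 2 :=
        Finset.single_le_sum (fun j _ => sq_nonneg (x j)) (Finset.mem_univ i)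
      rw [dot_self_eq_sum_sq]
      linarith
    have hst : star x = x := by
      funext i; simp
    rw [hst]
    have := hlow x
    nlinarith [mul_pos h1θ' hxx]
  have hdet : IsUnit G.det := isUnit_iff_ne_zero.mpr (ne_of_gt hGpd.det_pos)
  have hGGi : G * G⁻¹ = 1 := Matrix.mul_nonsing_inv G hdet
  have hGiT : G⁻¹ᵀ = G⁻¹ := by rw [Matrix.transpose_nonsing_inv, hGsym]
  have hWT : Wᵀ = X * (G⁻¹ * Yᵀ) := by
    rw [hW, Matrix.transpose_mul, Matrix.transpose_mul, Matrix.transpose_transpose, hGiT]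
  constructor
  · intro u
    set w : Fin K × Fin n → ℝ := Yᵀ.mulVec u with hwdef
    set z : Fin K × Fin n → ℝ := G⁻¹.mulVec w with hzdef
    have hGz : G.mulVec z = w := by
      rw [hzdef, Matrix.mulVec_mulVec, hGGi, Matrix.one_mulVec]
    have hWtu : Wᵀ.mulVec u = X.mulVec z := by
      rw [hWT, ← Matrix.mulVec_mulVec, ← Matrix.mulVec_mulVec, ← hwdef, ← hzdef]
    have hwc : ∀ c : Fin K × Fin n, w c = u c.1 := by
      intro c
      rw [hwdef]
      simp [hY, Matrix.mulVec, dotProduct, Matrix.transpose_apply]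
    have hww : w ⬝ᵥ w = (n:ℝ) * (u ⬝ᵥ u) := by
      rw [dot_self_eq_sum_sq, dot_self_eq_sum_sq]
      simp only [hwc]
      rw [Fintype.sum_prod_type]
      calc ∑ k : Fin K, ∑ _j : Fin n, u k ^ 2
          = ∑ k : Fin K, (n:ℝ) * u k ^ 2 := by
            simp [Finset.sum_const, Finset.card_univ, nsmul_eq_mul]
        _ = (n:ℝ) * ∑ k, u k ^ 2 := by rw [Finset.mul_sum]
    have hkey := key_lower G hGsym θ hθ0 (by linarith) hlow hhigh z
    have hS : ∑ i, (Wᵀ.mulVec u) i ^ 2 = z ⬝ᵥ G.mulVec z := by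
      rw [← dot_self_eq_sum_sq]
      rw [hWtu, hXp]
    unfold euclNorm
    rw [← Real.sqrt_mul (by positivity : (0:ℝ) ≤ (n:ℝ) / (1 + θ))]
    apply Real.sqrt_le_sqrt
    rw [hS, div_mul_eq_mul_div, div_le_iff₀ h1θ]
    calc (n:ℝ) * ∑ k, u k ^ 2 = (n:ℝ) * (u ⬝ᵥ u) := by rw [dot_self_eq_sum_sq]
      _ = w ⬝ᵥ w := hww.symm
      _ = (G.mulVec z) ⬝ᵥ (G.mulVec z) := by rw [hGz]
      _ ≤ (1 + θ) * (z ⬝ᵥ G.mulVec z) := hkey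
      _ = (z ⬝ᵥ G.mulVec z) * (1 + θ) := mul_comm _ _
  · intro v
    set p : Fin K × Fin n → ℝ := G⁻¹.mulVec (Xᵀ.mulVec v) with hpdef
    have hGp : G.mulVec p = Xᵀ.mulVec v := by
      rw [hpdef, Matrix.mulVec_mulVec, hGGi, Matrix.one_mulVec]
    have hWv : W.mulVec v = Y.mulVec p := by
      rw [hW, ← Matrix.mulVec_mulVec, ← Matrix.mulVec_mulVec, ← hpdef]
    have hgp0 : 0 ≤ p ⬝ᵥ G.mulVec p :=
      le_trans (mul_nonneg h1θ'.le (dot_self_nonneg' p)) (hlow p)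
    have hgpv : p ⬝ᵥ G.mulVec p ≤ v ⬝ᵥ v := by
      have h1 : p ⬝ᵥ G.mulVec p = (X.mulVec p) ⬝ᵥ v := by
        rw [hGp, Matrix.dotProduct_mulVec, Matrix.vecMul_transpose]
      have h2 := dot_sq_le (X.mulVec p) v
      rw [hXp, ← h1] at h2
      rcases eq_or_lt_of_le hgp0 with h0 | h0
      · rw [← h0]; exact dot_self_nonneg' v
      · nlinarith [h2]
    have hYk : ∀ k, (Y.mulVec p) k = ∑ j, p (k, j) := by
      intro k
      rw [hY]
      simp only [Matrix.mulVec, dotProduct, Matrix.of_apply, ite_mul, one_mul, zero_mul]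
      rw [Fintype.sum_prod_type, Finset.sum_comm]
      simp [Finset.sum_ite_eq']
    have hk : ∀ k, (∑ j, p (k, j)) ^ 2 ≤ (n:ℝ) * ∑ j, p (k, j) ^ 2 := by
      intro k
      have hcs := Finset.sum_mul_sq_le_sq_mul_sq Finset.univ
        (fun _ : Fin n => (1:ℝ)) (fun j => p (k, j))
      simp only [one_mul, one_pow] at hcs
      have hc : (∑ _j : Fin n, (1:ℝ)) = (n:ℝ) := by simp
      rw [hc] at hcs
      exact hcs
    have hYp : ∑ k, (Y.mulVec p) k ^ 2 ≤ (n:ℝ) * (p ⬝ᵥ p) := by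
      calc ∑ k, (Y.mulVec p) k ^ 2 = ∑ k, (∑ j, p (k, j)) ^ 2 := by simp only [hYk]
        _ ≤ ∑ k, (n:ℝ) * ∑ j, p (k, j) ^ 2 := Finset.sum_le_sum fun k _ => hk k
        _ = (n:ℝ) * ∑ k, ∑ j, p (k, j) ^ 2 := by rw [Finset.mul_sum]
        _ = (n:ℝ) * (p ⬝ᵥ p) := by rw [dot_self_eq_sum_sq, Fintype.sum_prod_type]
    unfold euclNorm
    rw [← Real.sqrt_mul (by positivity : (0:ℝ) ≤ (n:ℝ) / (1 - θ))]
    apply Real.sqrt_le_sqrt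
    rw [div_mul_eq_mul_div, le_div_iff₀ h1θ']
    have hWvS : ∑ i, (W.mulVec v) i ^ 2 = ∑ k, (Y.mulVec p) k ^ 2 := by
      simp only [hWv]
    rw [hWvS]
    have hpp := hlow p
    have hvv : v ⬝ᵥ v = ∑ i, v i ^ 2 := dot_self_eq_sum_sq v
    rw [hvv] at hgpv
    have t1 : (∑ k, (Y.mulVec p) k ^ 2) * (1 - θ) ≤ ((n:ℝ) * (p ⬝ᵥ p)) * (1 - θ) :=
      mul_le_mul_of_nonneg_right hYp h1θ'.le
    have t2 : (n:ℝ) * ((1 - θ) * (p ⬝ᵥ p)) ≤ (n:ℝ) * (p ⬝ᵥ G.mulVec p) :=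
      mul_le_mul_of_nonneg_left hpp hn'.le
    have t3 : (n:ℝ) * (p ⬝ᵥ G.mulVec p) ≤ (n:ℝ) * ∑ i, v i ^ 2 :=
      mul_le_mul_of_nonneg_left hgpv hn'.le
    linarith [t1, t2, t3]
end

section
/- If exact balancedness W_{l+1}ᵀW_{l+1} = W_l W_lᵀ holds for all l ∈ [L−2] and ‖W_LᵀW_L − W_{L−1}W_{L−1}ᵀ‖_F ≤ δ, then the end-to-end Gram matrix satisfies ‖W_{L:1}ᵀW_{L:1} − (W_1ᵀW_1)^L‖_F ≤ δ · ∏_{l=1}^{L−1} ‖W_l‖². -/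
open scoped BigOperators
open Matrix

/-- The (ℓ₂ → ℓ₂) operator norm of a real matrix: the supremum of `‖Av‖` over
unit vectors `v`. -/
noncomputable def opNorm {m n : Type*} [Fintype m] [Fintype n] (A : Matrix m n ℝ) : ℝ :=
  sSup {r : ℝ | ∃ v : n → ℝ, euclNorm v = 1 ∧ r = euclNorm (A.mulVec v)}

section Aux

variable {m n p : Type*} [Fintype m] [Fintype n] [Fintype p]

lemma euclNorm_nonneg (v : n → ℝ) : 0 ≤ euclNorm v := Real.sqrt_nonneg _

lemma frobNorm_nonneg (A : Matrix m n ℝ) : 0 ≤ frobNorm A := Real.sqrt_nonneg _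

lemma euclNorm_sq (v : n → ℝ) : euclNorm v ^ 2 = ∑ i, v i ^ 2 :=
  Real.sq_sqrt (by positivity)

lemma frobNorm_sq (A : Matrix m n ℝ) : frobNorm A ^ 2 = ∑ i, ∑ j, A i j ^ 2 :=
  Real.sq_sqrt (by positivity)

lemma le_of_sq_le_sq' {a b : ℝ} (ha : 0 ≤ a) (hb : 0 ≤ b) (h : a ^ 2 ≤ b ^ 2) : a ≤ b := by
  nlinarith

lemma euclNorm_zero : euclNorm (0 : n → ℝ) = 0 := by simp [euclNorm]

lemma euclNorm_eq_zero {v : n → ℝ} (h : euclNorm v = 0) : v = 0 := by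
  have hsum : ∑ i, v i ^ 2 = 0 := by
    have := euclNorm_sq v
    rw [h] at this
    simpa using this.symm
  funext i
  have := (Finset.sum_eq_zero_iff_of_nonneg (fun i _ => sq_nonneg (v i))).mp hsum i
    (Finset.mem_univ i)
  exact (pow_eq_zero_iff two_ne_zero).mp this

lemma euclNorm_smul (c : ℝ) (v : n → ℝ) : euclNorm (c • v) = |c| * euclNorm v := by
  unfold euclNorm
  rw [← Real.sqrt_sq_eq_abs, ← Real.sqrt_mul (sq_nonneg c), Finset.mul_sum]
  congr 1
  refine Finset.sum_congr rfl fun i _ => ?_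
  simp [mul_pow]

lemma dot_le_norms (v w : n → ℝ) : v ⬝ᵥ w ≤ euclNorm v * euclNorm w := by
  have h := Finset.sum_mul_sq_le_sq_mul_sq Finset.univ v w
  have h1 : v ⬝ᵥ w ≤ Real.sqrt ((∑ i, v i ^ 2) * (∑ i, w i ^ 2)) := by
    calc v ⬝ᵥ w = ∑ i, v i * w i := rfl
      _ ≤ |∑ i, v i * w i| := le_abs_self _
      _ = Real.sqrt ((∑ i, v i * w i) ^ 2) := (Real.sqrt_sq_eq_abs _).symm
      _ ≤ _ := Real.sqrt_le_sqrt h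
  rwa [Real.sqrt_mul (by positivity)] at h1

lemma euclNorm_mulVec_le_frob (A : Matrix m n ℝ) (v : n → ℝ) :
    euclNorm (A.mulVec v) ≤ frobNorm A * euclNorm v := by
  apply le_of_sq_le_sq' (euclNorm_nonneg _)
    (mul_nonneg (frobNorm_nonneg _) (euclNorm_nonneg _))
  rw [mul_pow, euclNorm_sq, frobNorm_sq, euclNorm_sq]
  calc ∑ i, A.mulVec v i ^ 2 = ∑ i, (∑ j, A i j * v j) ^ 2 := rfl
    _ ≤ ∑ i, ((∑ j, A i j ^ 2) * ∑ j, v j ^ 2) := by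
        refine Finset.sum_le_sum fun i _ => ?_
        exact Finset.sum_mul_sq_le_sq_mul_sq Finset.univ _ _
    _ = (∑ i, ∑ j, A i j ^ 2) * ∑ j, v j ^ 2 := by rw [Finset.sum_mul]

lemma opSet_bddAbove (A : Matrix m n ℝ) :
    BddAbove {r : ℝ | ∃ v : n → ℝ, euclNorm v = 1 ∧ r = euclNorm (A.mulVec v)} := by
  refine ⟨frobNorm A, ?_⟩
  rintro r ⟨v, hv, rfl⟩
  have h := euclNorm_mulVec_le_frob A v
  rwa [hv, mul_one] at h

lemma opNorm_le {A : Matrix m n ℝ} {c : ℝ} (hc : 0 ≤ c)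
    (h : ∀ v : n → ℝ, euclNorm v = 1 → euclNorm (A.mulVec v) ≤ c) : opNorm A ≤ c := by
  apply Real.sSup_le _ hc
  rintro r ⟨v, hv, rfl⟩
  exact h v hv

lemma opNorm_nonneg (A : Matrix m n ℝ) : 0 ≤ opNorm A := by
  rcases Set.eq_empty_or_nonempty
      {r : ℝ | ∃ v : n → ℝ, euclNorm v = 1 ∧ r = euclNorm (A.mulVec v)} with h | ⟨r, hr⟩
  · unfold opNorm
    rw [h, Real.sSup_empty]
  · obtain ⟨v, hv, rfl⟩ := hr
    exact le_trans (euclNorm_nonneg _) (le_csSup (opSet_bddAbove A) ⟨v, hv, rfl⟩)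

lemma euclNorm_mulVec_le (A : Matrix m n ℝ) (v : n → ℝ) :
    euclNorm (A.mulVec v) ≤ opNorm A * euclNorm v := by
  by_cases h0 : euclNorm v = 0
  · rw [h0, mul_zero, euclNorm_eq_zero h0, Matrix.mulVec_zero, euclNorm_zero]
  · have hpos : 0 < euclNorm v := lt_of_le_of_ne (euclNorm_nonneg v) (Ne.symm h0)
    set u : n → ℝ := (euclNorm v)⁻¹ • v with hu_def
    have hu : euclNorm u = 1 := by
      rw [hu_def, euclNorm_smul, abs_inv, abs_of_pos hpos]
      field_simp
    have hAu : euclNorm (A.mulVec u) ≤ opNorm A := by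
      unfold opNorm
      exact le_csSup (opSet_bddAbove A) ⟨u, hu, rfl⟩
    have hmv : A.mulVec u = (euclNorm v)⁻¹ • A.mulVec v := by
      rw [hu_def, Matrix.mulVec_smul]
    rw [hmv, euclNorm_smul, abs_inv, abs_of_pos hpos] at hAu
    calc euclNorm (A.mulVec v)
        = euclNorm v * ((euclNorm v)⁻¹ * euclNorm (A.mulVec v)) := by field_simp
      _ ≤ euclNorm v * opNorm A := mul_le_mul_of_nonneg_left hAu hpos.le
      _ = opNorm A * euclNorm v := mul_comm _ _

lemma frob_mul_le (A : Matrix m p ℝ) (B : Matrix p n ℝ) :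
    frobNorm (A * B) ≤ opNorm A * frobNorm B := by
  apply le_of_sq_le_sq' (frobNorm_nonneg _)
    (mul_nonneg (opNorm_nonneg A) (frobNorm_nonneg B))
  rw [frobNorm_sq, mul_pow, frobNorm_sq, Finset.sum_comm]
  calc ∑ j, ∑ i, (A * B) i j ^ 2
      = ∑ j, euclNorm (A.mulVec (fun k => B k j)) ^ 2 := by
        refine Finset.sum_congr rfl fun j _ => ?_
        rw [euclNorm_sq]
        refine (Finset.sum_congr rfl fun i _ => ?_)
        simp [Matrix.mul_apply, Matrix.mulVec, dotProduct]
    _ ≤ ∑ j, (opNorm A * euclNorm (fun k => B k j)) ^ 2 := by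
        refine Finset.sum_le_sum fun j _ => ?_
        exact pow_le_pow_left₀ (euclNorm_nonneg _) (euclNorm_mulVec_le A _) 2
    _ = opNorm A ^ 2 * ∑ j, ∑ k, B k j ^ 2 := by
        simp only [mul_pow, euclNorm_sq, Finset.mul_sum]
    _ = opNorm A ^ 2 * ∑ k, ∑ j, B k j ^ 2 := by rw [Finset.sum_comm]

lemma frobNorm_transpose (A : Matrix m n ℝ) : frobNorm Aᵀ = frobNorm A := by
  unfold frobNorm
  congr 1
  exact Finset.sum_comm

lemma euclNorm_sq_dot (v : n → ℝ) : euclNorm v ^ 2 = v ⬝ᵥ v := by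
  rw [euclNorm_sq]
  refine Finset.sum_congr rfl fun i _ => ?_
  ring

lemma opNorm_transpose_le (A : Matrix m n ℝ) : opNorm Aᵀ ≤ opNorm A := by
  apply opNorm_le (opNorm_nonneg A)
  intro u hu
  have hsq : euclNorm (Aᵀ.mulVec u) ^ 2 = u ⬝ᵥ A.mulVec (Aᵀ.mulVec u) := by
    rw [euclNorm_sq_dot, Matrix.mulVec_transpose, Matrix.dotProduct_mulVec]
  have key : euclNorm (Aᵀ.mulVec u) ^ 2 ≤ opNorm A * euclNorm (Aᵀ.mulVec u) := by
    calc euclNorm (Aᵀ.mulVec u) ^ 2 = u ⬝ᵥ A.mulVec (Aᵀ.mulVec u) := hsq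
      _ ≤ euclNorm u * euclNorm (A.mulVec (Aᵀ.mulVec u)) := dot_le_norms _ _
      _ = euclNorm (A.mulVec (Aᵀ.mulVec u)) := by rw [hu, one_mul]
      _ ≤ opNorm A * euclNorm (Aᵀ.mulVec u) := euclNorm_mulVec_le A _
  by_cases h0 : euclNorm (Aᵀ.mulVec u) = 0
  · rw [h0]; exact opNorm_nonneg A
  · have hpos : 0 < euclNorm (Aᵀ.mulVec u) :=
      lt_of_le_of_ne (euclNorm_nonneg _) (Ne.symm h0)
    nlinarith

lemma frob_mul_le_right (B : Matrix m p ℝ) (A : Matrix p n ℝ) :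
    frobNorm (B * A) ≤ frobNorm B * opNorm A := by
  rw [← frobNorm_transpose (B * A), Matrix.transpose_mul]
  calc frobNorm (Aᵀ * Bᵀ) ≤ opNorm Aᵀ * frobNorm Bᵀ := frob_mul_le _ _
    _ ≤ opNorm A * frobNorm B := by
        rw [frobNorm_transpose]
        exact mul_le_mul_of_nonneg_right (opNorm_transpose_le A) (frobNorm_nonneg B)
    _ = frobNorm B * opNorm A := mul_comm _ _

lemma opNorm_mul_le (A : Matrix m p ℝ) (B : Matrix p n ℝ) :
    opNorm (A * B) ≤ opNorm A * opNorm B := by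
  apply opNorm_le (mul_nonneg (opNorm_nonneg A) (opNorm_nonneg B))
  intro v hv
  rw [← Matrix.mulVec_mulVec]
  calc euclNorm (A.mulVec (B.mulVec v)) ≤ opNorm A * euclNorm (B.mulVec v) :=
        euclNorm_mulVec_le A _
    _ ≤ opNorm A * (opNorm B * euclNorm v) :=
        mul_le_mul_of_nonneg_left (euclNorm_mulVec_le B v) (opNorm_nonneg A)
    _ = opNorm A * opNorm B := by rw [hv, mul_one]

lemma opNorm_one_le [DecidableEq n] : opNorm (1 : Matrix n n ℝ) ≤ 1 :=
  opNorm_le zero_le_one fun v hv => by rw [Matrix.one_mulVec, hv]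

end Aux

section Prod

noncomputable def Qmat {d : ℕ} (W : ℕ → Matrix (Fin d) (Fin d) ℝ) (k : ℕ) :
    Matrix (Fin d) (Fin d) ℝ :=
  ((List.range k).reverse.map fun i => W (i + 1)).prod

lemma Qmat_zero {d : ℕ} (W : ℕ → Matrix (Fin d) (Fin d) ℝ) : Qmat W 0 = 1 := rfl

lemma Qmat_succ {d : ℕ} (W : ℕ → Matrix (Fin d) (Fin d) ℝ) (k : ℕ) :
    Qmat W (k + 1) = W (k + 1) * Qmat W k := by
  unfold Qmat
  rw [List.range_succ]
  simp

lemma sandwich {a b : Type*} [Fintype a] [Fintype b] [DecidableEq a] [DecidableEq b]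
    (B : Matrix a b ℝ) (m : ℕ) :
    Bᵀ * (B * Bᵀ) ^ m * B = (Bᵀ * B) ^ (m + 1) := by
  induction m with
  | zero => simp [pow_succ]
  | succ m ih =>
    have h : Bᵀ * (B * Bᵀ) ^ (m + 1) * B = (Bᵀ * (B * Bᵀ) ^ m * B) * (Bᵀ * B) := by
      simp only [pow_succ, Matrix.mul_assoc]
    rw [h, ih, ← pow_succ]

lemma invariant {d : ℕ} (L : ℕ) (W : ℕ → Matrix (Fin d) (Fin d) ℝ)
    (hbal : ∀ l, 1 ≤ l → l ≤ L - 2 → (W (l + 1))ᵀ * W (l + 1) = W l * (W l)ᵀ) :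
    ∀ k, 1 ≤ k → k ≤ L - 1 → ∀ m,
      (Qmat W k)ᵀ * (W k * (W k)ᵀ) ^ m * Qmat W k = ((W 1)ᵀ * W 1) ^ (k + m) := by
  intro k
  induction k with
  | zero => intro h; omega
  | succ k ih =>
    intro _ hk m
    by_cases hk0 : k = 0
    · subst hk0
      rw [Qmat_succ, Qmat_zero, mul_one, sandwich]
      congr 1
      omega
    · have hk1 : 1 ≤ k := Nat.one_le_iff_ne_zero.mpr hk0
      have hbalk := hbal k hk1 (by omega)
      have hkL : k ≤ L - 1 := by omega
      rw [Qmat_succ, Matrix.transpose_mul]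
      have h : ((Qmat W k)ᵀ * (W (k + 1))ᵀ) * (W (k + 1) * (W (k + 1))ᵀ) ^ m *
            (W (k + 1) * Qmat W k)
          = (Qmat W k)ᵀ * ((W (k + 1))ᵀ * (W (k + 1) * (W (k + 1))ᵀ) ^ m * W (k + 1)) *
            Qmat W k := by
        simp only [Matrix.mul_assoc]
      rw [h, sandwich, hbalk, ih hk1 hkL (m + 1)]
      congr 1
      omega

lemma opNorm_Qmat_le {d : ℕ} (W : ℕ → Matrix (Fin d) (Fin d) ℝ) (k : ℕ) :
    opNorm (Qmat W k) ≤ ∏ l ∈ Finset.range k, opNorm (W (l + 1)) := by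
  induction k with
  | zero => simpa [Qmat_zero] using (opNorm_one_le (n := Fin d))
  | succ k ih =>
    rw [Qmat_succ, Finset.prod_range_succ]
    calc opNorm (W (k + 1) * Qmat W k) ≤ opNorm (W (k + 1)) * opNorm (Qmat W k) :=
          opNorm_mul_le _ _
      _ ≤ opNorm (W (k + 1)) * ∏ l ∈ Finset.range k, opNorm (W (l + 1)) :=
          mul_le_mul_of_nonneg_left ih (opNorm_nonneg _)
      _ = (∏ l ∈ Finset.range k, opNorm (W (l + 1))) * opNorm (W (k + 1)) := mul_comm _ _

end Prod

/-- If `W_{l+1}ᵀW_{l+1} = W_l W_lᵀ` for all `l ∈ [L−2]` and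
`‖W_LᵀW_L − W_{L−1}W_{L−1}ᵀ‖_F ≤ δ`, then the end-to-end product
`P = W_L W_{L−1} ⋯ W_1` satisfies
`‖PᵀP − (W_1ᵀW_1)^L‖_F ≤ δ·∏_{l=1}^{L−1}‖W_l‖²`. -/
theorem end_to_end_gram_bound {d K : ℕ} (L : ℕ) (hL : 2 ≤ L) (δ : ℝ)
    (W : ℕ → Matrix (Fin d) (Fin d) ℝ) (WL : Matrix (Fin K) (Fin d) ℝ)
    (hbal : ∀ l, 1 ≤ l → l ≤ L - 2 → (W (l + 1))ᵀ * W (l + 1) = W l * (W l)ᵀ)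
    (hlast : frobNorm (WLᵀ * WL - W (L - 1) * (W (L - 1))ᵀ) ≤ δ)
    (P : Matrix (Fin K) (Fin d) ℝ)
    (hP : P = WL * (((List.range (L - 1)).reverse.map fun i => W (i + 1)).prod)) :
    frobNorm (Pᵀ * P - ((W 1)ᵀ * W 1) ^ L) ≤
      δ * ∏ l ∈ Finset.range (L - 1), opNorm (W (l + 1)) ^ 2 := by
  have hδ : 0 ≤ δ := le_trans (frobNorm_nonneg _) hlast
  set Q : Matrix (Fin d) (Fin d) ℝ := Qmat W (L - 1) with hQ
  have hPQ : P = WL * Q := hP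
  set E : Matrix (Fin d) (Fin d) ℝ := WLᵀ * WL - W (L - 1) * (W (L - 1))ᵀ with hE
  -- the Gram identity
  have hgram : Pᵀ * P - ((W 1)ᵀ * W 1) ^ L = Qᵀ * E * Q := by
    have h1 : Pᵀ * P = Qᵀ * (WLᵀ * WL) * Q := by
      rw [hPQ, Matrix.transpose_mul]
      simp only [Matrix.mul_assoc]
    have h2 : ((W 1)ᵀ * W 1) ^ L = Qᵀ * (W (L - 1) * (W (L - 1))ᵀ) * Q := by
      have h := invariant L W hbal (L - 1) (by omega) le_rfl 1
      rw [pow_one] at h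
      have hL' : L - 1 + 1 = L := by omega
      rw [hL'] at h
      exact h.symm
    rw [h1, h2, hE, Matrix.mul_sub, Matrix.sub_mul]
  rw [hgram]
  -- norm bound
  set c : ℝ := ∏ l ∈ Finset.range (L - 1), opNorm (W (l + 1)) with hc
  have hc0 : 0 ≤ c := Finset.prod_nonneg fun l _ => opNorm_nonneg _
  have hQc : opNorm Q ≤ c := opNorm_Qmat_le W (L - 1)
  have hQtc : opNorm Qᵀ ≤ c := le_trans (opNorm_transpose_le Q) hQc
  have hbound : frobNorm (Qᵀ * E * Q) ≤ opNorm Qᵀ * (frobNorm E * opNorm Q) := by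
    rw [Matrix.mul_assoc]
    calc frobNorm (Qᵀ * (E * Q)) ≤ opNorm Qᵀ * frobNorm (E * Q) := frob_mul_le _ _
      _ ≤ opNorm Qᵀ * (frobNorm E * opNorm Q) :=
          mul_le_mul_of_nonneg_left (frob_mul_le_right E Q) (opNorm_nonneg _)
  have hrhs : δ * ∏ l ∈ Finset.range (L - 1), opNorm (W (l + 1)) ^ 2 = δ * c ^ 2 := by
    rw [hc, Finset.prod_pow]
  rw [hrhs]
  have hEnn : 0 ≤ frobNorm E := frobNorm_nonneg _
  have hQt0 : 0 ≤ opNorm Qᵀ := opNorm_nonneg _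
  have hQ0 : 0 ≤ opNorm Q := opNorm_nonneg _
  calc frobNorm (Qᵀ * E * Q) ≤ opNorm Qᵀ * (frobNorm E * opNorm Q) := hbound
    _ ≤ c * (δ * c) :=
        mul_le_mul hQtc (mul_le_mul hlast hQc hQ0 hδ) (mul_nonneg hEnn hQ0) hc0
    _ = δ * c ^ 2 := by ring
end
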